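/- Let $X_{\mathcal{A}}$ and $X_{\mathcal{B}}$ be matrices with linearly independent columns such that the columns of $X_{\mathcal{A}}$ form a subset of the columns of $X_{\mathcal{B}}$. Then $A_{\mathcal{A}} \geq A_{\mathcal{B}}$, where $A_{\mathcal{C}} = (\mathbf{1}'(X_{\mathcal{C}}'X_{\mathcal{C}})^{-1}\mathbf{1})^{-1/2}$. Moreover, if $X_{\mathcal{A}}$ has a single unit-length column, then $A_{\mathcal{A}} = 1$. -/

import Mathlib

open Matrix

section Helpers

set_option linter.unusedSectionVars false

variable {m k : Type*} [Fintype m] [Fintype k] [DecidableEq k]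

lemma dot_gram (X : Matrix m k ℝ) (x y : k → ℝ) :
    x ⬝ᵥ ((Xᵀ * X) *ᵥ y) = (X *ᵥ x) ⬝ᵥ (X *ᵥ y) := by
  rw [← mulVec_mulVec, dotProduct_mulVec x Xᵀ, vecMul_transpose]

lemma gram_posDef (X : Matrix m k ℝ) (hli : LinearIndependent ℝ Xᵀ) :
    (Xᵀ * X).PosDef := by
  refine PosDef.of_dotProduct_mulVec_pos (by simpa using isHermitian_conjTranspose_mul_self X) fun x hx => ?_
  have hsym : star x ⬝ᵥ ((Xᵀ * X) *ᵥ x) = (X *ᵥ x) ⬝ᵥ (X *ᵥ x) := by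
    rw [star_trivial, dot_gram]
  rw [hsym]
  have hne : X *ᵥ x ≠ 0 := by
    intro hXx
    apply hx
    have hsum : ∑ i, x i • Xᵀ i = 0 := by
      funext j
      simpa [mulVec, dotProduct, mul_comm] using congrFun hXx j
    have := Fintype.linearIndependent_iff.mp hli x hsum
    funext j; exact this j
  have h0 : (X *ᵥ x) ⬝ᵥ (X *ᵥ x) ≠ 0 := fun h => hne (dotProduct_self_eq_zero.mp h)
  exact lt_of_le_of_ne (Finset.sum_nonneg fun i _ => mul_self_nonneg _) (Ne.symm h0)

lemma sym_dot {G : Matrix k k ℝ} (hG : G.IsHermitian) (x y : k → ℝ) :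
    x ⬝ᵥ (G *ᵥ y) = (G *ᵥ x) ⬝ᵥ y := by
  have hGT : Gᵀ = G := IsSymm.eq (by simpa using hG)
  rw [dotProduct_mulVec x G y]
  congr 1
  rw [← mulVec_transpose, hGT]

lemma cs_dot {G : Matrix k k ℝ} (hG : G.PosSemidef) (x y : k → ℝ) :
    (x ⬝ᵥ (G *ᵥ y)) ^ 2 ≤ (x ⬝ᵥ (G *ᵥ x)) * (y ⬝ᵥ (G *ᵥ y)) := by
  have hyx : y ⬝ᵥ (G *ᵥ x) = x ⬝ᵥ (G *ᵥ y) := by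
    rw [sym_dot hG.1, dotProduct_comm]
  have key : ∀ t : ℝ, 0 ≤ (y ⬝ᵥ (G *ᵥ y)) * (t * t) + (2 * (x ⬝ᵥ (G *ᵥ y))) * t
      + (x ⬝ᵥ (G *ᵥ x)) := by
    intro t
    have h := hG.dotProduct_mulVec_nonneg (x + t • y)
    rw [star_trivial] at h
    refine h.trans_eq ?_
    simp only [mulVec_add, mulVec_smul, dotProduct_add, add_dotProduct, dotProduct_smul,
      smul_dotProduct, smul_eq_mul, hyx]
    ring
  have hd := discrim_le_zero key
  rw [discrim] at hd
  nlinarith [hd]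

end Helpers

theorem stmt2 (n k l : ℕ) (hk : 0 < k)
    (XA : Matrix (Fin n) (Fin k) ℝ) (XB : Matrix (Fin n) (Fin l) ℝ)
    (f : Fin k → Fin l) (hf : Function.Injective f)
    (hcols : ∀ i j, XA i j = XB i (f j))
    (hliA : LinearIndependent ℝ XA.transpose)
    (hliB : LinearIndependent ℝ XB.transpose) :
    let AA : ℝ :=
      (Real.sqrt ((1 : Fin k → ℝ) ⬝ᵥ ((XA.transpose * XA)⁻¹ *ᵥ (1 : Fin k → ℝ))))⁻¹
    let AB : ℝ :=
      (Real.sqrt ((1 : Fin l → ℝ) ⬝ᵥ ((XB.transpose * XB)⁻¹ *ᵥ (1 : Fin l → ℝ))))⁻¹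
    AB ≤ AA ∧
      (k = 1 → (∀ j, (fun i => XA i j) ⬝ᵥ (fun i => XA i j) = 1) → AA = 1) := by
  intro AA AB
  have hGA : (XAᵀ * XA).PosDef := gram_posDef XA hliA
  have hGB : (XBᵀ * XB).PosDef := gram_posDef XB hliB
  set GA := XAᵀ * XA with hGAdef
  set GB := XBᵀ * XB with hGBdef
  have hGAinv : GA⁻¹.PosDef := hGA.inv
  have hGBinv : GB⁻¹.PosDef := hGB.inv
  set qA : ℝ := (1 : Fin k → ℝ) ⬝ᵥ (GA⁻¹ *ᵥ (1 : Fin k → ℝ)) with hqAdef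
  set qB : ℝ := (1 : Fin l → ℝ) ⬝ᵥ (GB⁻¹ *ᵥ (1 : Fin l → ℝ)) with hqBdef
  have honek : (1 : Fin k → ℝ) ≠ 0 := by
    intro h
    have := congrFun h ⟨0, hk⟩
    simp at this
  have honel : (1 : Fin l → ℝ) ≠ 0 := by
    intro h
    have := congrFun h (f ⟨0, hk⟩)
    simp at this
  have hqA : 0 < qA := by
    have := hGAinv.dotProduct_mulVec_pos honek
    rwa [star_trivial] at this
  have hqB : 0 < qB := by
    have := hGBinv.dotProduct_mulVec_pos honel
    rwa [star_trivial] at this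
  have hAmul : GA * GA⁻¹ = 1 := mul_nonsing_inv GA (isUnit_iff_ne_zero.mpr hGA.det_pos.ne')
  have hBmul : GB * GB⁻¹ = 1 := mul_nonsing_inv GB (isUnit_iff_ne_zero.mpr hGB.det_pos.ne')
  set w : Fin k → ℝ := GA⁻¹ *ᵥ (1 : Fin k → ℝ) with hwdef
  have hGAw : GA *ᵥ w = 1 := by
    rw [hwdef, mulVec_mulVec, hAmul, one_mulVec]
  set p : Fin k → ℝ := qA⁻¹ • w with hpdef
  have h1w : (1 : Fin k → ℝ) ⬝ᵥ w = qA := by rw [hwdef, ← hqAdef]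
  have h1p : (1 : Fin k → ℝ) ⬝ᵥ p = 1 := by
    rw [hpdef, dotProduct_smul, smul_eq_mul, h1w]
    exact inv_mul_cancel₀ hqA.ne'
  have hpGp : p ⬝ᵥ (GA *ᵥ p) = qA⁻¹ := by
    rw [hpdef, mulVec_smul, hGAw, smul_dotProduct, dotProduct_smul, smul_eq_mul, smul_eq_mul,
      dotProduct_comm, h1w]
    field_simp
  set P : Fin l → ℝ := fun j => ∑ j', if f j' = j then p j' else 0 with hPdef
  have hXP : XB *ᵥ P = XA *ᵥ p := by
    funext i
    simp only [mulVec, dotProduct, hPdef, Finset.mul_sum, mul_ite, mul_zero]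
    rw [Finset.sum_comm]
    refine Finset.sum_congr rfl fun j' _ => ?_
    rw [Finset.sum_ite_eq Finset.univ (f j') (fun j => XB i j * p j')]
    simp [hcols i j']
  have h1P : (1 : Fin l → ℝ) ⬝ᵥ P = 1 := by
    simp only [dotProduct, hPdef, Pi.one_apply, one_mul]
    rw [Finset.sum_comm, ← h1p]
    simp only [dotProduct, Pi.one_apply, one_mul]
    refine Finset.sum_congr rfl fun j' _ => ?_
    rw [Finset.sum_ite_eq Finset.univ (f j') (fun _ => p j')]
    simp
  have hPGP : P ⬝ᵥ (GB *ᵥ P) = qA⁻¹ := by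
    rw [hGBdef, dot_gram, hXP, ← dot_gram, ← hGAdef, hpGp]
  set wB : Fin l → ℝ := GB⁻¹ *ᵥ (1 : Fin l → ℝ) with hwBdef
  have hGBw : GB *ᵥ wB = 1 := by
    rw [hwBdef, mulVec_mulVec, hBmul, one_mulVec]
  have hcs := cs_dot hGB.posSemidef wB P
  have h1 : wB ⬝ᵥ (GB *ᵥ P) = 1 := by
    rw [sym_dot hGB.1, hGBw]; exact h1P
  have h2 : wB ⬝ᵥ (GB *ᵥ wB) = qB := by
    rw [hGBw, dotProduct_comm, hwBdef, ← hqBdef]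
  rw [h1, h2, hPGP, one_pow] at hcs
  have hqAB : qA ≤ qB := by
    rw [← div_eq_mul_inv, le_div_iff₀ hqA, one_mul] at hcs
    exact hcs
  constructor
  · show (Real.sqrt qB)⁻¹ ≤ (Real.sqrt qA)⁻¹
    exact inv_anti₀ (Real.sqrt_pos.mpr hqA) (Real.sqrt_le_sqrt hqAB)
  · intro hk1 hunit
    subst hk1
    have hGA1 : GA = 1 := by
      ext i j
      have hi : i = 0 := Subsingleton.elim i 0
      have hj : j = 0 := Subsingleton.elim j 0
      subst hi; subst hj
      have h00 := hunit 0
      simp only [dotProduct] at h00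
      rw [hGAdef]
      simpa [Matrix.mul_apply, Matrix.one_apply] using h00
    show (Real.sqrt qA)⁻¹ = 1
    have hq1 : qA = 1 := by
      rw [hqAdef, hwdef, hGA1, inv_one, one_mulVec]
      simp [dotProduct]
    rw [hq1, Real.sqrt_one, inv_one]
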